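/- Let F be a field of characteristic zero, Λ1, Λ2 ∈ F, and set ρ1 = Λ1 + Λ2 − 2Λ1Λ2 − 1, ρ2 = 1 − Λ1 − Λ2. Suppose x1, x2, y ∈ F satisfy (x1−1)(x2−1) ≠ 0 and y² = x1(x1−1)(x1−Λ1)·x2(x2−1)(x2−Λ2). Define u = x1x2/((x1−1)(x2−1)), X = x1x2(x1+x2−1)(x1−Λ1)(x1x2−Λ2(x1+x2)+Λ2)/((x1−1)³(x2−1)³), and Y = x1²x2(x1+x2−1)(x1x2−Λ2(x1+x2)+Λ2)·y/((x1−1)⁴(x2−1)⁵). Then Y² = X·(X + (1/2)u(u−1)((ρ1−ρ2)u − (ρ1+ρ2)))·(X + (1/2)u((ρ1−ρ2)u² − 2(ρ1+1)u + (ρ1+ρ2))). -/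

import Mathlib

set_option maxHeartbeats 4000000 in
/-- the birational equivalence between the double quadric surface
`𝒵 : y² = x₁(x₁−1)(x₁−Λ₁)·x₂(x₂−1)(x₂−Λ₂)` and the Weierstrass model of the Jacobian
elliptic fibration with singular fibers `2 I₂* + 4 I₂` on `Kum(E₁ × E₂)`. -/
theorem stmt_10 (F : Type*) [Field F] [CharZero F] (L1 L2 : F)
    (x1 x2 y : F)
    (hden : (x1 - 1) * (x2 - 1) ≠ 0)
    (h : y ^ 2 = x1 * (x1 - 1) * (x1 - L1) * (x2 * (x2 - 1) * (x2 - L2))) :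
    let r1 := L1 + L2 - 2 * L1 * L2 - 1
    let r2 := 1 - L1 - L2
    let u := x1 * x2 / ((x1 - 1) * (x2 - 1))
    let X := x1 * x2 * (x1 + x2 - 1) * (x1 - L1) * (x1 * x2 - L2 * (x1 + x2) + L2) /
      ((x1 - 1) ^ 3 * (x2 - 1) ^ 3)
    let Y := x1 ^ 2 * x2 * (x1 + x2 - 1) * (x1 * x2 - L2 * (x1 + x2) + L2) * y /
      ((x1 - 1) ^ 4 * (x2 - 1) ^ 5)
    Y ^ 2 = X * (X + (1 / 2 : F) * u * (u - 1) * ((r1 - r2) * u - (r1 + r2))) *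
      (X + (1 / 2 : F) * u * ((r1 - r2) * u ^ 2 - 2 * (r1 + 1) * u + (r1 + r2))) := by
  intro r1 r2 u X Y
  have h1 : (x1 - 1) ≠ 0 := fun hx => hden (by rw [hx]; ring)
  have h2 : (x2 - 1) ≠ 0 := fun hx => hden (by rw [hx]; ring)
  set NX := x1*x2*(x1+x2-1)*(x1-L1)*(x1*x2-L2*(x1+x2)+L2) with hNX
  set Q1 := (x1*x2)*((x1*x2)-((x1-1)*(x2-1)))*
      (((L1+L2-2*L1*L2-1)-(1-L1-L2))*(x1*x2)-((L1+L2-2*L1*L2-1)+(1-L1-L2))*((x1-1)*(x2-1))) with hQ1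
  set Q2 := (x1*x2)*(((L1+L2-2*L1*L2-1)-(1-L1-L2))*(x1*x2)^2
      -2*((L1+L2-2*L1*L2-1)+1)*(x1*x2)*((x1-1)*(x2-1))
      +((L1+L2-2*L1*L2-1)+(1-L1-L2))*((x1-1)*(x2-1))^2) with hQ2
  have key : 4*(x1-1)^2*(x1^2*x2*(x1+x2-1)*(x1*x2-L2*(x1+x2)+L2))^2*(x1*(x1-L1)*(x2*(x2-L2))) =
      NX * (2*NX+Q1) * (2*NX+Q2) := by
    rw [hNX, hQ1, hQ2]; ring
  have e1 : X + (1/2:F)*u*(u-1)*((r1-r2)*u-(r1+r2)) =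
      (2*NX+Q1) / (2*((x1-1)^3*(x2-1)^3)) := by
    simp only [r1, r2, u, X, hNX, hQ1]
    field_simp
  have e2 : X + (1/2:F)*u*((r1-r2)*u^2-2*(r1+1)*u+(r1+r2)) =
      (2*NX+Q2) / (2*((x1-1)^3*(x2-1)^3)) := by
    simp only [r1, r2, u, X, hNX, hQ2]
    field_simp
  rw [e1, e2]
  simp only [Y]
  rw [div_pow, mul_pow, h, div_mul_div_comm, div_mul_div_comm, ← key,
    div_eq_div_iff (by simp [mul_eq_zero, pow_eq_zero_iff, h1, h2])
      (by simp [mul_eq_zero, pow_eq_zero_iff, h1, h2])]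
  generalize x1 ^ 2 * x2 * (x1 + x2 - 1) * (x1 * x2 - L2 * (x1 + x2) + L2) = A
  ring
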